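/- Let (A, (·,·), R) be a locally finite root supersystem over a field F of characteristic zero. Set A_re := ⟨R_re⟩, the subgroup of A generated by R_re, with the restricted form. Then (A_re, (·,·)|_{A_re×A_re}, R_re) is a locally finite root system, i.e., a locally finite root supersystem all of whose nonzero roots are real (its set of nonsingular roots is {0}); in particular the form restricted to A_re is nondegenerate. -/

import Mathlib

open Pointwise

/-- A symmetric biadditive form with values in `F`. -/
structure IsSymForm {F : Type*} [Field F] {A : Type*} [AddCommGroup A]
    (form : A → A → F) : Prop where
  symm : ∀ a b, form a b = form b a
  add_left : ∀ a b c, form (a + b) c = form a c + form b c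

/-- The radical `A⁰` of a form. -/
def formRadical {F : Type*} [Field F] {A : Type*} [AddCommGroup A]
    (form : A → A → F) : Set A := {a | ∀ b, form a b = 0}

/-- The set of real roots `R_re = {α ∈ R | (α,α) ≠ 0} ∪ {0}`. -/
def reRoots {F : Type*} [Field F] {A : Type*} [AddCommGroup A]
    (form : A → A → F) (R : Set A) : Set A :=
  {α | α ∈ R ∧ form α α ≠ 0} ∪ {0}

/-- The set of nonsingular roots `R_ns = {α ∈ R \ A⁰ | (α,α) = 0} ∪ {0}`. -/
def nsRoots {F : Type*} [Field F] {A : Type*} [AddCommGroup A]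
    (form : A → A → F) (R : Set A) : Set A :=
  {α | α ∈ R ∧ form α α = 0 ∧ α ∉ formRadical form} ∪ {0}

/-- Extended affine root supersystem. -/
structure IsEARS {F : Type*} [Field F] [CharZero F] {A : Type*} [AddCommGroup A]
    (form : A → A → F) (R : Set A) extends IsSymForm form : Prop where
  zero_mem : (0 : A) ∈ R
  closure_eq_top : AddSubgroup.closure R = ⊤
  neg_mem : ∀ α ∈ R, -α ∈ R
  cartan : ∀ α ∈ R, form α α ≠ 0 → ∀ β ∈ R, ∃ k : ℤ, 2 * form α β = (k : F) * form α α
  string : ∀ α ∈ R, form α α ≠ 0 → ∀ β ∈ R, ∃ p q : ℕ,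
      2 * form β α = ((p : F) - (q : F)) * form α α ∧
      (∀ k : ℤ, β + k • α ∈ R ↔ -(p : ℤ) ≤ k ∧ k ≤ (q : ℤ))
  ns_string : ∀ α ∈ R, form α α = 0 → ∀ β ∈ R, form α β ≠ 0 →
      (β - α ∈ R ∨ β + α ∈ R)

/-- Locally finite root supersystem: an EARS with nondegenerate form. -/
def IsLFRSS {F : Type*} [Field F] [CharZero F] {A : Type*} [AddCommGroup A]
    (form : A → A → F) (R : Set A) : Prop :=
  IsEARS form R ∧ ∀ a : A, (∀ b, form a b = 0) → a = 0

/-- `α` and `β` are connected in `X` by a finite chain with consecutive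
elements non-orthogonal. -/
def ConnectedIn {F : Type*} [Field F] {A : Type*} [AddCommGroup A]
    (form : A → A → F) (X : Set A) (α β : A) : Prop :=
  ∃ (n : ℕ) (c : Fin (n + 1) → A), (∀ i, c i ∈ X) ∧ c 0 = α ∧ c (Fin.last n) = β ∧
    ∀ i : Fin n, form (c i.castSucc) (c i.succ) ≠ 0

/-- A connected subset. -/
def IsConnectedSet {F : Type*} [Field F] {A : Type*} [AddCommGroup A]
    (form : A → A → F) (X : Set A) : Prop :=
  ∀ α ∈ X, ∀ β ∈ X, ConnectedIn form X α β

/-- Irreducibility: `R_re ≠ {0}` and `R \ R⁰` is connected. -/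
def IsIrreducibleRSS {F : Type*} [Field F] {A : Type*} [AddCommGroup A]
    (form : A → A → F) (R : Set A) : Prop :=
  reRoots form R ≠ {0} ∧ IsConnectedSet form (R \ formRadical form)

/-- Sub-supersystem of a locally finite root supersystem. -/
def IsSubSupersystem {F : Type*} [Field F] {A : Type*} [AddCommGroup A]
    (form : A → A → F) (R S : Set A) : Prop :=
  S ⊆ R ∧
  (∀ a ∈ AddSubgroup.closure S, (∀ b ∈ AddSubgroup.closure S, form a b = 0) → a = 0) ∧
  (0 : A) ∈ S ∧
  (∀ α ∈ S, form α α ≠ 0 → ∀ β ∈ S, ∀ k : ℤ,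
      2 * form β α = (k : F) * form α α → β - k • α ∈ S) ∧
  (∀ γ ∈ S, form γ γ = 0 → ∀ β ∈ S, form β γ ≠ 0 → (γ - β ∈ S ∨ γ + β ∈ S))

/-- `Π` is an integral base of `R` (a `ℤ`-basis of the group generated by `R`). -/
def IsIntegralBase {F : Type*} [Field F] {A : Type*} [AddCommGroup A]
    (form : A → A → F) (R P : Set A) : Prop :=
  P ⊆ R ∧ LinearIndependent ℤ (fun p : P => (p : A)) ∧
    Submodule.span ℤ P = Submodule.span ℤ R

/-- `Π` is a base of `R`. -/
def IsBase {F : Type*} [Field F] {A : Type*} [AddCommGroup A]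
    (form : A → A → F) (R P : Set A) : Prop :=
  IsIntegralBase form R P ∧
  ∀ α ∈ R \ formRadical form, ∃ (n : ℕ) (a : Fin n → A) (r : Fin n → ℤ),
    (∀ i, a i ∈ P) ∧ (∀ i, r i = 1 ∨ r i = -1) ∧
    α = ∑ i, r i • a i ∧
    ∀ t : Fin n, (∑ i ∈ Finset.Iic t, r i • a i) ∈ R \ formRadical form

section RSSAux

variable {F : Type*} [Field F] [CharZero F] {A : Type*} [AddCommGroup A]
variable {form : A → A → F} {R : Set A}

theorem RSS.form_zero_left (hs : IsSymForm form) (b : A) : form 0 b = 0 := by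
  have := hs.add_left 0 0 b
  rw [add_zero] at this
  exact (left_eq_add.mp this)

theorem RSS.form_zero_right (hs : IsSymForm form) (a : A) : form a 0 = 0 := by
  rw [hs.symm]; exact RSS.form_zero_left hs a

theorem RSS.form_add_right (hs : IsSymForm form) (a b c : A) :
    form a (b + c) = form a b + form a c := by
  rw [hs.symm, hs.add_left, hs.symm b a, hs.symm c a]

theorem RSS.form_neg_left (hs : IsSymForm form) (a b : A) : form (-a) b = - form a b := by
  have := hs.add_left a (-a) b
  rw [add_neg_cancel, RSS.form_zero_left hs] at this
  exact (eq_neg_of_add_eq_zero_right this.symm)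

theorem RSS.form_neg_right (hs : IsSymForm form) (a b : A) : form a (-b) = - form a b := by
  rw [hs.symm, RSS.form_neg_left hs, hs.symm]

theorem RSS.form_sub_left (hs : IsSymForm form) (a b c : A) :
    form (a - b) c = form a c - form b c := by
  rw [sub_eq_add_neg, hs.add_left, RSS.form_neg_left hs, sub_eq_add_neg]

theorem RSS.form_zsmul_left (hs : IsSymForm form) (k : ℤ) (a b : A) :
    form (k • a) b = (k : F) * form a b := by
  induction k using Int.induction_on with
  | zero => simpa using RSS.form_zero_left hs b
  | succ n ih => rw [add_zsmul, one_zsmul, hs.add_left, ih]; push_cast; ring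
  | pred n ih =>
    rw [sub_zsmul, one_zsmul, sub_eq_add_neg, hs.add_left, RSS.form_neg_left hs, ih]
    push_cast; ring

theorem RSS.form_zsmul_right (hs : IsSymForm form) (k : ℤ) (a b : A) :
    form a (k • b) = (k : F) * form a b := by
  rw [hs.symm, RSS.form_zsmul_left hs, hs.symm]

theorem RSS.mem_reRoots {x : A} :
    x ∈ reRoots form R ↔ (x ∈ R ∧ form x x ≠ 0) ∨ x = 0 := by
  simp [reRoots, Set.mem_union, Set.mem_setOf_eq, Set.mem_singleton_iff, or_comm]

theorem RSS.reRoots_mem_R (h : IsLFRSS form R) {x : A} (hx : x ∈ reRoots form R) : x ∈ R := by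
  rcases RSS.mem_reRoots.mp hx with ⟨h1, _⟩ | h0
  · exact h1
  · rw [h0]; exact h.1.zero_mem

/-- From the string axiom: membership of `ξ + k • ρ` for `k` between `0` and `-s`. -/
theorem RSS.str_mem (h : IsLFRSS form R) {ρ ξ : A} (hρR : ρ ∈ R) (hρw : form ρ ρ ≠ 0)
    (hξR : ξ ∈ R) (s : ℤ) (hs : 2 * form ξ ρ = (s : F) * form ρ ρ) (k : ℤ)
    (hk : (0 ≤ k ∧ k ≤ -s) ∨ (-s ≤ k ∧ k ≤ 0)) : ξ + k • ρ ∈ R := by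
  obtain ⟨p, q, hpq, hstr⟩ := h.1.string ρ hρR hρw ξ hξR
  have hcast : (s : F) = ((p : F) - q) := mul_right_cancel₀ hρw (hs.symm.trans hpq)
  have hspq : s = (p : ℤ) - q := by exact_mod_cast hcast
  exact (hstr k).mpr ⟨by omega, by omega⟩

theorem RSS.L1pos (h : IsLFRSS form R) {δ α : A} (hδR : δ ∈ R) (hδδ : form δ δ = 0)
    (hαR : α ∈ R) (hw : form α α ≠ 0) (t : ℤ) (ht : 1 ≤ t)
    (hδα : 2 * form δ α = (t : F) * form α α) (hmem : δ + α ∈ R) : False := by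
  have hs := h.1.toIsSymForm
  have hηw : form (δ + α) (δ + α) = ((t : F) + 1) * form α α := by
    simp only [hs.add_left, RSS.form_add_right hs, hδδ]
    rw [hs.symm α δ]
    linear_combination hδα
  have hηw' : form (δ + α) (δ + α) ≠ 0 := by
    rw [hηw]
    have h1 : ((t : F) + 1) ≠ 0 := by
      have : ((t + 1 : ℤ) : F) ≠ 0 := Int.cast_ne_zero.mpr (by omega)
      push_cast at this; exact this
    exact mul_ne_zero h1 hw
  obtain ⟨m, hm⟩ := h.1.cartan (δ + α) hmem hηw' δ hδR
  have hL : 2 * form (δ + α) δ = (t : F) * form α α := by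
    simp only [hs.add_left, hδδ]
    rw [hs.symm α δ]
    linear_combination hδα
  have heq : (t : F) * form α α = (m : F) * (((t : F) + 1) * form α α) := by
    rw [← hL, hm, hηw]
  have hint : t = m * (t + 1) := by
    have h2 : ((t : ℤ) : F) = ((m * (t + 1) : ℤ) : F) := by
      push_cast
      have := mul_right_cancel₀ hw (by linear_combination heq :
        (t : F) * form α α = ((m : F) * ((t:F) + 1)) * form α α)
      linear_combination this
    exact_mod_cast h2
  rcases le_or_gt m 0 with hm0 | hm0
  · have : m * (t + 1) ≤ 0 := mul_nonpos_of_nonpos_of_nonneg hm0 (by omega)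
    linarith
  · have h1 : 1 ≤ m := hm0
    have : t + 1 ≤ m * (t + 1) := le_mul_of_one_le_left (by omega) h1
    linarith

theorem RSS.L1neg (h : IsLFRSS form R) {δ α : A} (hδR : δ ∈ R) (hδδ : form δ δ = 0)
    (hαR : α ∈ R) (hw : form α α ≠ 0) (t : ℤ) (ht : t ≤ -1)
    (hδα : 2 * form δ α = (t : F) * form α α) (hmem : δ - α ∈ R) : False := by
  have hs := h.1.toIsSymForm
  apply RSS.L1pos h (h.1.neg_mem δ hδR)
    (by rw [RSS.form_neg_left hs, RSS.form_neg_right hs, hδδ, neg_zero, neg_zero])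
    hαR hw (-t) (by omega)
    (by rw [RSS.form_neg_left hs]; push_cast; linear_combination -hδα)
  have hmem2 := h.1.neg_mem _ hmem
  rw [neg_sub] at hmem2
  rwa [show -δ + α = α - δ by abel]

theorem RSS.lemC (h : IsLFRSS form R) {δ α : A} (hδR : δ ∈ R) (hδδ : form δ δ = 0)
    (hδne : δ ≠ 0) (hαR : α ∈ R) (hw : form α α ≠ 0) (hperp : form δ α = 0)
    (hmem : δ + α ∈ R) : False := by
  have hs := h.1.toIsSymForm
  have hαδ : form α δ = 0 := by rw [hs.symm]; exact hperp
  have hγγ : form (δ + α) (δ + α) = form α α := by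
    simp only [hs.add_left, RSS.form_add_right hs, hδδ, hperp, hαδ]
    ring
  have hγw : form (δ + α) (δ + α) ≠ 0 := by rw [hγγ]; exact hw
  have hγα : 2 * form (δ + α) α = ((2 : ℤ) : F) * form α α := by
    simp only [hs.add_left, hperp]
    push_cast; ring
  have hδmα : δ - α ∈ R := by
    have h0 := RSS.str_mem h hαR hw hmem 2 hγα (-2) (Or.inr ⟨by norm_num, by norm_num⟩)
    rwa [show δ + α + (-2 : ℤ) • α = δ - α by abel] at h0
  have step : ∀ n : ℤ, (n • δ - α ∈ R) →
      ((n + 1) • δ ∈ R ∧ (n + 2) • δ - α ∈ R) := by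
    intro n hξ
    have hξγ : 2 * form (n • δ - α) (δ + α) = ((-2 : ℤ) : F) * form (δ + α) (δ + α) := by
      rw [hγγ, RSS.form_sub_left hs, RSS.form_zsmul_left hs,
        RSS.form_add_right hs, RSS.form_add_right hs, hδδ, hperp, hαδ]
      push_cast; ring
    have h1 := RSS.str_mem h hmem hγw hξ (-2) hξγ 1 (Or.inl ⟨by norm_num, by norm_num⟩)
    have h2 := RSS.str_mem h hmem hγw hξ (-2) hξγ 2 (Or.inl ⟨by norm_num, by norm_num⟩)
    rw [show n • δ - α + (1 : ℤ) • (δ + α) = (n + 1) • δ by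
      rw [add_zsmul, one_zsmul, one_zsmul]; abel] at h1
    rw [show n • δ - α + (2 : ℤ) • (δ + α) = ((n + 2) • δ + α) by
      rw [add_zsmul]; abel] at h2
    have hη : 2 * form ((n + 2) • δ + α) α = ((2 : ℤ) : F) * form α α := by
      rw [hs.add_left, RSS.form_zsmul_left hs, hperp]
      push_cast; ring
    have h3 := RSS.str_mem h hαR hw h2 2 hη (-2) (Or.inr ⟨by norm_num, by norm_num⟩)
    rw [show (n + 2) • δ + α + (-2 : ℤ) • α = (n + 2) • δ - α by abel] at h3
    exact ⟨h1, h3⟩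
  have Pall : ∀ n : ℕ, ((n : ℤ) • δ - α ∈ R) ∧ (((n : ℤ) + 1) • δ - α ∈ R) := by
    intro n
    induction n with
    | zero =>
      constructor
      · rw [Nat.cast_zero, zero_zsmul, zero_sub]; exact h.1.neg_mem α hαR
      · rw [Nat.cast_zero, zero_add, one_zsmul]; exact hδmα
    | succ n ih =>
      constructor
      · rw [show ((n + 1 : ℕ) : ℤ) = (n : ℤ) + 1 by push_cast; ring]; exact ih.2
      · rw [show ((n + 1 : ℕ) : ℤ) + 1 = (n : ℤ) + 2 by push_cast; ring]
        exact (step _ ih.1).2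
  have hnδ : ∀ n : ℕ, ((n : ℤ) + 1) • δ ∈ R := fun n => (step _ (Pall n).1).1
  have hμex : ∃ μ ∈ R, form δ μ ≠ 0 := by
    by_contra hc
    push_neg at hc
    apply hδne
    apply h.2 δ
    intro b
    have hbmem : b ∈ AddSubgroup.closure R := by rw [h.1.closure_eq_top]; trivial
    induction hbmem using AddSubgroup.closure_induction with
    | mem y hy => exact hc y hy
    | zero => exact RSS.form_zero_right hs δ
    | add y z _ _ hy hz => rw [RSS.form_add_right hs, hy, hz, add_zero]
    | neg y _ hy => rw [RSS.form_neg_right hs, hy, neg_zero]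
  obtain ⟨μ, hμR, hY⟩ := hμex
  have hXmem : ∀ n : ℕ, ∃ ζ : ℤ, ζ.natAbs = n + 1 ∧ μ + ζ • δ ∈ R := by
    intro n
    have hnd := hnδ n
    have hnorm : form (((n : ℤ) + 1) • δ) (((n : ℤ) + 1) • δ) = 0 := by
      rw [RSS.form_zsmul_left hs, RSS.form_zsmul_right hs, hδδ]; ring
    have hpair : form (((n : ℤ) + 1) • δ) μ ≠ 0 := by
      rw [RSS.form_zsmul_left hs]
      exact mul_ne_zero (Int.cast_ne_zero.mpr (by omega)) hY
    rcases h.1.ns_string _ hnd hnorm μ hμR hpair with hcase | hcase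
    · refine ⟨-((n : ℤ) + 1), by omega, ?_⟩
      rwa [neg_zsmul, ← sub_eq_add_neg]
    · exact ⟨(n : ℤ) + 1, by omega, hcase⟩
  have hXval : ∀ ζ : ℤ, form (μ + ζ • δ) (μ + ζ • δ) = form μ μ + 2 * (ζ : F) * form δ μ := by
    intro ζ
    simp only [hs.add_left, RSS.form_add_right hs, RSS.form_zsmul_left hs,
      RSS.form_zsmul_right hs, hδδ]
    rw [hs.symm μ δ]; ring
  have hbadu : ∀ ζ ζ' : ℤ, form μ μ + 2 * (ζ : F) * form δ μ = 0 →
      form μ μ + 2 * (ζ' : F) * form δ μ = 0 → ζ = ζ' := by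
    intro ζ ζ' e e'
    have h2 : ((ζ - ζ' : ℤ) : F) * (2 * form δ μ) = 0 := by
      push_cast; linear_combination e - e'
    rcases mul_eq_zero.mp h2 with h' | h'
    · have : (ζ - ζ' : ℤ) = 0 := by exact_mod_cast h'
      omega
    · exact absurd h' (mul_ne_zero two_ne_zero hY)
  have hgood : ∀ ζ : ℤ, (μ + ζ • δ ∈ R) → form μ μ + 2 * (ζ : F) * form δ μ ≠ 0 →
      ∃ m : ℤ, m ≠ 0 ∧ 2 * form δ μ = (m : F) * (form μ μ + 2 * (ζ : F) * form δ μ) := by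
    intro ζ hmem' hXne
    have hXnorm : form (μ + ζ • δ) (μ + ζ • δ) ≠ 0 := by rw [hXval]; exact hXne
    obtain ⟨m, hm⟩ := h.1.cartan _ hmem' hXnorm δ hδR
    have hL : form (μ + ζ • δ) δ = form δ μ := by
      rw [hs.add_left, RSS.form_zsmul_left hs, hδδ, hs.symm μ δ]; ring
    rw [show 2 * form (μ + ζ • δ) δ = 2 * form δ μ by rw [hL], hXval] at hm
    refine ⟨m, ?_, hm⟩
    rintro rfl
    rw [Int.cast_zero, zero_mul] at hm
    exact hY ((mul_eq_zero.mp hm).resolve_left two_ne_zero)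
  have pairC : ∀ ζ ζ' : ℤ, (μ + ζ • δ ∈ R) → (μ + ζ' • δ ∈ R) →
      form μ μ + 2 * (ζ : F) * form δ μ ≠ 0 →
      form μ μ + 2 * (ζ' : F) * form δ μ ≠ 0 →
      3 ≤ (ζ - ζ').natAbs → False := by
    intro ζ ζ' m1 m2 x1 x2 hgap
    obtain ⟨m, hm0, hme⟩ := hgood ζ m1 x1
    obtain ⟨m', hm0', hme'⟩ := hgood ζ' m2 x2
    have hzz : ((m' - m - m * m' * (ζ - ζ') : ℤ) : F) * (2 * form δ μ) = 0 := by
      push_cast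
      linear_combination (m' : F) * hme - (m : F) * hme'
    have hz2 : (m' - m - m * m' * (ζ - ζ') : ℤ) = 0 := by
      rcases mul_eq_zero.mp hzz with h' | h'
      · exact_mod_cast h'
      · exact absurd h' (mul_ne_zero two_ne_zero hY)
    have heq2 : m' - m = m * m' * (ζ - ζ') := by linarith
    have hnat : (m' - m).natAbs = m.natAbs * m'.natAbs * (ζ - ζ').natAbs := by
      rw [heq2, Int.natAbs_mul, Int.natAbs_mul]
    have hle : (m' - m).natAbs ≤ m'.natAbs + m.natAbs := Int.natAbs_sub_le m' m
    have h1 : 1 ≤ m.natAbs := by omega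
    have h2 : 1 ≤ m'.natAbs := by omega
    have k1 : m.natAbs * m'.natAbs * 3 ≤ m.natAbs * m'.natAbs * (ζ - ζ').natAbs :=
      Nat.mul_le_mul (le_refl _) hgap
    have k2 : m'.natAbs ≤ m.natAbs * m'.natAbs := Nat.le_mul_of_pos_left _ (by omega)
    have k3 : m.natAbs ≤ m.natAbs * m'.natAbs := Nat.le_mul_of_pos_right _ (by omega)
    have k4 : 0 < m.natAbs * m'.natAbs := Nat.mul_pos (by omega) (by omega)
    linarith [k1, k2, k3, k4, hnat, hle]
  obtain ⟨ζ1, hz1, hm1⟩ := hXmem 0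
  obtain ⟨ζ4, hz4, hm4⟩ := hXmem 3
  obtain ⟨ζ7, hz7, hm7⟩ := hXmem 6
  by_cases b1 : form μ μ + 2 * (ζ1 : F) * form δ μ = 0
  · have x4 : form μ μ + 2 * (ζ4 : F) * form δ μ ≠ 0 := fun e => by
      have := hbadu _ _ b1 e; omega
    have x7 : form μ μ + 2 * (ζ7 : F) * form δ μ ≠ 0 := fun e => by
      have := hbadu _ _ b1 e; omega
    exact pairC ζ4 ζ7 hm4 hm7 x4 x7 (by omega)
  · by_cases b4 : form μ μ + 2 * (ζ4 : F) * form δ μ = 0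
    · have x7 : form μ μ + 2 * (ζ7 : F) * form δ μ ≠ 0 := fun e => by
        have := hbadu _ _ b4 e; omega
      exact pairC ζ1 ζ7 hm1 hm7 b1 x7 (by omega)
    · exact pairC ζ1 ζ4 hm1 hm4 b1 b4 (by omega)

theorem RSS.auxPos (h : IsLFRSS form R) {α β : A} (hαR : α ∈ R) (hw : form α α ≠ 0)
    (hβre : β ∈ reRoots form R) (p q : ℕ)
    (hpq : 2 * form β α = ((p : F) - (q : F)) * form α α)
    (hstr : ∀ k : ℤ, β + k • α ∈ R ↔ -(p : ℤ) ≤ k ∧ k ≤ (q : ℤ))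
    (k₀ : ℤ) (hk₀ : -(p : ℤ) ≤ k₀ ∧ k₀ ≤ (q : ℤ))
    (hδ0 : form (β + k₀ • α) (β + k₀ • α) = 0) (hδne : β + k₀ • α ≠ 0)
    (ht : 1 ≤ (p : ℤ) - q + 2 * k₀) :
    ∃ p' q' : ℕ, 2 * form β α = ((p' : F) - (q' : F)) * form α α ∧
      ∀ k : ℤ, β + k • α ∈ reRoots form R ↔ -(p' : ℤ) ≤ k ∧ k ≤ (q' : ℤ) := by
  have hs := h.1.toIsSymForm
  have hδα2 : 2 * form (β + k₀ • α) α = (((p : ℤ) - q + 2 * k₀ : ℤ) : F) * form α α := by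
    rw [hs.add_left, RSS.form_zsmul_left hs]
    push_cast
    linear_combination hpq
  have hq : k₀ = (q : ℤ) := by
    by_contra hne
    have hlt : k₀ + 1 ≤ (q : ℤ) := by omega
    have hmm : (β + k₀ • α) + α ∈ R := by
      rw [show (β + k₀ • α) + α = β + (k₀ + 1) • α by rw [add_zsmul, one_zsmul]; abel]
      exact (hstr _).mpr ⟨by omega, hlt⟩
    exact RSS.L1pos h ((hstr k₀).mpr hk₀) hδ0 hαR hw _ ht hδα2 hmm
  have hβne : β ≠ 0 := by
    rintro rfl
    have he : form ((0 : A) + k₀ • α) (0 + k₀ • α) = ((k₀ * k₀ : ℤ) : F) * form α α := by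
      rw [zero_add, RSS.form_zsmul_left hs, RSS.form_zsmul_right hs]
      push_cast; ring
    rw [hδ0] at he
    have : ((k₀ * k₀ : ℤ) : F) = 0 :=
      (mul_eq_zero.mp he.symm).resolve_right hw
    have hk : (k₀ * k₀ : ℤ) = 0 := by exact_mod_cast this
    have hk0 : k₀ = 0 := by
      rcases mul_eq_zero.mp hk with h' | h' <;> exact h'
    apply hδne
    rw [hk0, zero_zsmul, zero_add]
  have hβw : form β β ≠ 0 := by
    rcases RSS.mem_reRoots.mp hβre with ⟨_, h2⟩ | h0
    · exact h2
    · exact absurd h0 hβne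
  have hE0 : form β β + 2 * (k₀ : F) * form β α + (k₀ : F) * (k₀ : F) * form α α = 0 := by
    rw [← hδ0]
    simp only [hs.add_left, RSS.form_add_right hs, RSS.form_zsmul_left hs,
      RSS.form_zsmul_right hs]
    rw [hs.symm α β]
    ring
  have hN : ∀ k : ℤ, form (β + k • α) (β + k • α) =
      (((k - k₀) * (k - k₀ + ((p : ℤ) - q + 2 * k₀)) : ℤ) : F) * form α α := by
    intro k
    simp only [hs.add_left, RSS.form_add_right hs, RSS.form_zsmul_left hs,
      RSS.form_zsmul_right hs]
    rw [hs.symm α β]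
    push_cast
    linear_combination hE0 + ((k : F) - (k₀ : F)) * hpq
  have hq1 : 1 ≤ q := by
    by_contra hq0'
    have hq0 : (q : ℤ) = 0 := by omega
    have hk00 : k₀ = 0 := by omega
    apply hβw
    rw [← hδ0, hk00, zero_zsmul, add_zero]
  have hp1 : 1 ≤ p := by
    by_contra hp0'
    have hp0 : (p : ℤ) = 0 := by omega
    have hz : ((0 - k₀) * (0 - k₀ + ((p : ℤ) - q + 2 * k₀)) : ℤ) = 0 := by
      have : (0 - k₀ + ((p : ℤ) - q + 2 * k₀)) = 0 := by omega
      rw [this, mul_zero]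
    have := hN 0
    rw [hz] at this
    rw [zero_zsmul, add_zero] at this
    apply hβw
    rw [this, Int.cast_zero, zero_mul]
  have hnegp : β + (-(p : ℤ)) • α ≠ 0 := by
    intro h0
    have hδeq : β + k₀ • α = (k₀ + p) • α := by
      have e : (β + (-(p : ℤ)) • α) + (k₀ + p) • α = β + k₀ • α := by
        rw [add_assoc, ← add_zsmul, show -(p : ℤ) + (k₀ + p) = k₀ by ring]
      rw [← e, h0, zero_add]
    have he : form ((k₀ + p) • α) ((k₀ + p) • α) = (((k₀ + p) * (k₀ + p) : ℤ) : F) * form α α := by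
      rw [RSS.form_zsmul_left hs, RSS.form_zsmul_right hs]; push_cast; ring
    rw [← hδeq, hδ0] at he
    have : (((k₀ + p) * (k₀ + p) : ℤ) : F) = 0 := (mul_eq_zero.mp he.symm).resolve_right hw
    have hk : ((k₀ + p) * (k₀ + p) : ℤ) = 0 := by exact_mod_cast this
    have : k₀ + (p : ℤ) = 0 := by
      rcases mul_eq_zero.mp hk with h' | h' <;> exact h'
    omega
  refine ⟨p - 1, q - 1, ?_, ?_⟩
  · have hcc : ((p - 1 : ℕ) : F) - ((q - 1 : ℕ) : F) = (p : F) - q := by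
      rw [Nat.cast_sub hp1, Nat.cast_sub hq1]; push_cast; ring
    rw [hcc]; exact hpq
  · intro k
    constructor
    · intro hk
      rcases RSS.mem_reRoots.mp hk with ⟨hkR, hkw⟩ | hk0
      · have hb := (hstr k).mp hkR
        have hnz : ¬((k - k₀) * (k - k₀ + ((p : ℤ) - q + 2 * k₀)) = 0) := by
          intro e
          apply hkw
          rw [hN k, e, Int.cast_zero, zero_mul]
        have f1 : k - k₀ ≠ 0 := fun e => hnz (by rw [e, zero_mul])
        have f2 : k - k₀ + ((p : ℤ) - q + 2 * k₀) ≠ 0 := fun e => hnz (by rw [e, mul_zero])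
        omega
      · exfalso
        have hkR : β + k • α ∈ R := by rw [hk0]; exact h.1.zero_mem
        have hz : form (β + k • α) (β + k • α) = 0 := by
          rw [hk0]; exact RSS.form_zero_left hs 0
        rw [hN k] at hz
        have : ((k - k₀) * (k - k₀ + ((p : ℤ) - q + 2 * k₀)) : ℤ) = 0 := by
          exact_mod_cast (mul_eq_zero.mp hz).resolve_right hw
        rcases mul_eq_zero.mp this with h' | h'
        · have : k = k₀ := by omega
          rw [this] at hk0
          exact hδne hk0
        · have : k = -(p : ℤ) := by omega
          rw [this] at hk0
          exact hnegp hk0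
    · intro hk
      have hbk : -(p : ℤ) ≤ k ∧ k ≤ (q : ℤ) := by omega
      have hkR := (hstr k).mpr hbk
      apply RSS.mem_reRoots.mpr
      left
      refine ⟨hkR, ?_⟩
      rw [hN k]
      apply mul_ne_zero ?_ hw
      rw [Int.cast_ne_zero]
      have f1 : k - k₀ ≠ 0 := by omega
      have f2 : k - k₀ + ((p : ℤ) - q + 2 * k₀) ≠ 0 := by omega
      exact mul_ne_zero f1 f2

theorem RSS.main_string (h : IsLFRSS form R) {α β : A} (hαR : α ∈ R) (hw : form α α ≠ 0)
    (hβre : β ∈ reRoots form R) :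
    ∃ p' q' : ℕ, 2 * form β α = ((p' : F) - (q' : F)) * form α α ∧
      ∀ k : ℤ, β + k • α ∈ reRoots form R ↔ -(p' : ℤ) ≤ k ∧ k ≤ (q' : ℤ) := by
  have hs := h.1.toIsSymForm
  have hβR : β ∈ R := RSS.reRoots_mem_R h hβre
  obtain ⟨p, q, hpq, hstr⟩ := h.1.string α hαR hw β hβR
  by_cases hbad : ∃ k₀ : ℤ, (-(p : ℤ) ≤ k₀ ∧ k₀ ≤ (q : ℤ)) ∧
      form (β + k₀ • α) (β + k₀ • α) = 0 ∧ β + k₀ • α ≠ 0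
  · obtain ⟨k₀, hk₀, hδ0, hδne⟩ := hbad
    have hmw : form (-α) (-α) ≠ 0 := by
      rw [RSS.form_neg_left hs, RSS.form_neg_right hs, neg_neg]; exact hw
    rcases lt_trichotomy ((p : ℤ) - q + 2 * k₀) 0 with hneg | hzero | hpos
    · -- t ≤ -1 : apply auxPos with -α
      have hpq' : 2 * form β (-α) = ((q : F) - (p : F)) * form (-α) (-α) := by
        rw [RSS.form_neg_right hs, RSS.form_neg_left hs, RSS.form_neg_right hs, neg_neg]
        linear_combination -hpq
      have hstr' : ∀ k : ℤ, β + k • (-α) ∈ R ↔ -(q : ℤ) ≤ k ∧ k ≤ (p : ℤ) := by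
        intro k
        rw [show k • (-α) = (-k) • α by rw [neg_zsmul, zsmul_neg]]
        rw [hstr (-k)]
        omega
      have hδ0' : form (β + (-k₀) • (-α)) (β + (-k₀) • (-α)) = 0 := by
        rw [show (-k₀) • (-α) = k₀ • α by rw [neg_zsmul, zsmul_neg, neg_neg]]
        exact hδ0
      have hδne' : β + (-k₀) • (-α) ≠ 0 := by
        rw [show (-k₀) • (-α) = k₀ • α by rw [neg_zsmul, zsmul_neg, neg_neg]]
        exact hδne
      obtain ⟨p', q', he, hm⟩ := RSS.auxPos h (h.1.neg_mem α hαR) hmw hβre q p hpq' hstr'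
        (-k₀) (by omega) hδ0' hδne' (by omega)
      refine ⟨q', p', ?_, ?_⟩
      · rw [RSS.form_neg_right hs, RSS.form_neg_left hs, RSS.form_neg_right hs, neg_neg] at he
        linear_combination -he
      · intro k
        have hmk := hm (-k)
        rw [show (-k) • (-α) = k • α by rw [neg_zsmul, zsmul_neg, neg_neg]] at hmk
        rw [hmk]
        omega
    · -- t = 0 : contradiction via lemC
      exfalso
      have hδα2 : 2 * form (β + k₀ • α) α = (((p : ℤ) - q + 2 * k₀ : ℤ) : F) * form α α := by
        rw [hs.add_left, RSS.form_zsmul_left hs]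
        push_cast
        linear_combination hpq
      have hperp : form (β + k₀ • α) α = 0 := by
        rw [hzero] at hδα2
        rw [Int.cast_zero, zero_mul] at hδα2
        exact (mul_eq_zero.mp hδα2).resolve_left two_ne_zero
      have hnb : (k₀ + 1 ≤ (q : ℤ)) ∨ (-(p : ℤ) ≤ k₀ - 1) := by
        by_contra hc
        push_neg at hc
        have hk00 : k₀ = 0 := by omega
        have heq : β + k₀ • α = β := by rw [hk00, zero_zsmul, add_zero]
        rcases RSS.mem_reRoots.mp hβre with ⟨_, hβw⟩ | hβ0
        · exact hβw (by rw [← heq]; exact hδ0)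
        · exact hδne (by rw [heq, hβ0])
      rcases hnb with hnb | hnb
      · have hmm : (β + k₀ • α) + α ∈ R := by
          rw [show (β + k₀ • α) + α = β + (k₀ + 1) • α by rw [add_zsmul, one_zsmul]; abel]
          exact (hstr _).mpr ⟨by omega, hnb⟩
        exact RSS.lemC h ((hstr k₀).mpr hk₀) hδ0 hδne hαR hw hperp hmm
      · have hmm : (β + k₀ • α) + (-α) ∈ R := by
          rw [show (β + k₀ • α) + (-α) = β + (k₀ - 1) • α by rw [sub_zsmul, one_zsmul]; abel]
          exact (hstr _).mpr ⟨hnb, by omega⟩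
        exact RSS.lemC h ((hstr k₀).mpr hk₀) hδ0 hδne (h.1.neg_mem α hαR) hmw
          (by rw [RSS.form_neg_right hs, hperp, neg_zero]) hmm
    · exact RSS.auxPos h hαR hw hβre p q hpq hstr k₀ hk₀ hδ0 hδne (by omega)
  · push_neg at hbad
    refine ⟨p, q, hpq, fun k => ⟨?_, ?_⟩⟩
    · intro hk
      rcases RSS.mem_reRoots.mp hk with ⟨hkR, _⟩ | hk0
      · exact (hstr k).mp hkR
      · exact (hstr k).mp (by rw [hk0]; exact h.1.zero_mem)
    · intro hbk
      have hkR := (hstr k).mpr hbk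
      by_cases hz : form (β + k • α) (β + k • α) = 0
      · exact RSS.mem_reRoots.mpr (Or.inr (hbad k hbk hz))
      · exact RSS.mem_reRoots.mpr (Or.inl ⟨hkR, hz⟩)

theorem RSS.rep_sum (h : IsLFRSS form R) {x : A}
    (hx : x ∈ AddSubgroup.closure (reRoots form R)) :
    ∃ s : Multiset A, (∀ β ∈ s, β ∈ R ∧ form β β ≠ 0) ∧ s.sum = x := by
  have hs := h.1.toIsSymForm
  induction hx using AddSubgroup.closure_induction with
  | mem y hy =>
    rcases RSS.mem_reRoots.mp hy with ⟨h1, h2⟩ | h0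
    · exact ⟨{y}, by simpa using ⟨h1, h2⟩, by simp⟩
    · exact ⟨0, by simp, by simp [h0]⟩
  | zero => exact ⟨0, by simp, rfl⟩
  | add y z _ _ hy hz =>
    obtain ⟨s1, e1, f1⟩ := hy
    obtain ⟨s2, e2, f2⟩ := hz
    refine ⟨s1 + s2, ?_, by rw [Multiset.sum_add, f1, f2]⟩
    intro β hβ
    rcases Multiset.mem_add.mp hβ with h' | h'
    · exact e1 β h'
    · exact e2 β h'
  | neg y _ hy =>
    obtain ⟨s1, e1, f1⟩ := hy
    refine ⟨s1.map (fun z => -z), ?_, ?_⟩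
    · intro β hβ
      obtain ⟨γ, hγ, rfl⟩ := Multiset.mem_map.mp hβ
      refine ⟨h.1.neg_mem γ (e1 γ hγ).1, ?_⟩
      rw [RSS.form_neg_left hs, RSS.form_neg_right hs, neg_neg]
      exact (e1 γ hγ).2
    · rw [Multiset.sum_map_neg', f1]

theorem RSS.nondeg_key (h : IsLFRSS form R) : ∀ n : ℕ, ∀ s : Multiset A,
    s.card = n → (∀ β ∈ s, β ∈ R ∧ form β β ≠ 0) →
    (∀ ρ ∈ reRoots form R, form s.sum ρ = 0) → s.sum = 0 := by
  classical
  have hs := h.1.toIsSymForm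
  intro n
  induction n using Nat.strong_induction_on with
  | _ n ih =>
  intro s hcard hent hperp
  by_cases hs0 : s = 0
  · rw [hs0, Multiset.sum_zero]
  · obtain ⟨β₁, hβ₁⟩ := Multiset.exists_mem_of_ne_zero hs0
    obtain ⟨h1R, h1w⟩ := hent β₁ hβ₁
    have hcons : β₁ ::ₘ s.erase β₁ = s := Multiset.cons_erase hβ₁
    have hsum : s.sum = β₁ + (s.erase β₁).sum := by
      conv_lhs => rw [← hcons]
      rw [Multiset.sum_cons]
    have hperp1 : form s.sum β₁ = 0 :=
      hperp β₁ (RSS.mem_reRoots.mpr (Or.inl ⟨h1R, h1w⟩))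
    have hneg : ∃ β₂ ∈ s.erase β₁, ∃ k : ℤ, k ≤ -1 ∧
        2 * form β₁ β₂ = (k : F) * form β₁ β₁ := by
      by_contra hc
      push_neg at hc
      have hpt : ∀ γ ∈ s.erase β₁, ∃ k : ℤ, 0 ≤ k ∧
          2 * form β₁ γ = (k : F) * form β₁ β₁ := by
        intro γ hγ
        obtain ⟨k, hk⟩ := h.1.cartan β₁ h1R h1w γ
          (hent γ (Multiset.mem_of_mem_erase hγ)).1
        refine ⟨k, ?_, hk⟩
        by_contra hk0
        push_neg at hk0
        exact hc γ hγ k (by omega) hk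
      have hsumc : ∀ v : Multiset A,
          (∀ γ ∈ v, ∃ k : ℤ, 0 ≤ k ∧ 2 * form β₁ γ = (k : F) * form β₁ β₁) →
          ∃ K : ℤ, 0 ≤ K ∧ 2 * form β₁ v.sum = (K : F) * form β₁ β₁ := by
        intro v
        induction v using Multiset.induction_on with
        | empty =>
          intro _
          exact ⟨0, le_refl 0, by rw [Multiset.sum_zero, RSS.form_zero_right hs]; simp⟩
        | cons γ v ihv =>
          intro hv
          obtain ⟨K, hK0, hKe⟩ := ihv (fun γ' hγ' => hv γ' (Multiset.mem_cons_of_mem hγ'))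
          obtain ⟨k, hk0, hke⟩ := hv γ (Multiset.mem_cons_self γ v)
          refine ⟨k + K, by omega, ?_⟩
          rw [Multiset.sum_cons, RSS.form_add_right hs]
          push_cast
          linear_combination hke + hKe
      obtain ⟨K, hK0, hKe⟩ := hsumc (s.erase β₁) hpt
      have h0 : form β₁ s.sum = 0 := by rw [hs.symm]; exact hperp1
      rw [hsum, RSS.form_add_right hs] at h0
      have hfin : ((K + 2 : ℤ) : F) * form β₁ β₁ = 0 := by
        push_cast
        linear_combination -hKe + 2 * h0
      have hK2 : ((K + 2 : ℤ) : F) = 0 := (mul_eq_zero.mp hfin).resolve_right h1w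
      have : (K + 2 : ℤ) = 0 := by exact_mod_cast hK2
      omega
    obtain ⟨β₂, hβ₂u, k, hk1, hke⟩ := hneg
    obtain ⟨h2R, h2w⟩ := hent β₂ (Multiset.mem_of_mem_erase hβ₂u)
    have hδR : β₁ + β₂ ∈ R := by
      have hstep := RSS.str_mem h h1R h1w h2R k
        (by rw [hs.symm β₂ β₁]; exact hke) 1 (Or.inl ⟨by norm_num, by omega⟩)
      rwa [one_zsmul, add_comm] at hstep
    have hcons2 : β₂ ::ₘ (s.erase β₁).erase β₂ = s.erase β₁ := Multiset.cons_erase hβ₂u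
    have hsum2 : s.sum = (β₁ + β₂) + ((s.erase β₁).erase β₂).sum := by
      rw [hsum]
      conv_lhs => rw [← hcons2]
      rw [Multiset.sum_cons, add_assoc]
    have hentv : ∀ β ∈ (s.erase β₁).erase β₂, β ∈ R ∧ form β β ≠ 0 :=
      fun β hβ => hent β (Multiset.mem_of_mem_erase (Multiset.mem_of_mem_erase hβ))
    have hcard1 : (s.erase β₁).card = n - 1 := by
      rw [Multiset.card_erase_of_mem hβ₁, hcard]; rfl
    have hcard2 : ((s.erase β₁).erase β₂).card = n - 2 := by
      rw [Multiset.card_erase_of_mem hβ₂u, hcard1]; rfl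
    have hn2 : 2 ≤ n := by
      have hpos : 0 < (s.erase β₁).card := Multiset.card_pos.mpr (by
        intro h'
        rw [h'] at hβ₂u
        exact absurd hβ₂u (Multiset.notMem_zero β₂))
      omega
    by_cases hδz : β₁ + β₂ = 0
    · -- drop both elements
      have hres := ih (n - 2) (by omega) ((s.erase β₁).erase β₂) (by omega) hentv
        (by
          intro ρ hρ
          have : ((s.erase β₁).erase β₂).sum = s.sum := by rw [hsum2, hδz, zero_add]
          rw [this]
          exact hperp ρ hρ)
      rw [hsum2, hδz, zero_add]
      exact hres
    · by_cases hδw : form (β₁ + β₂) (β₁ + β₂) = 0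
      · exfalso
        have hδβ₁ : 2 * form (β₁ + β₂) β₁ = ((k + 2 : ℤ) : F) * form β₁ β₁ := by
          rw [hs.add_left, hs.symm β₂ β₁]
          push_cast
          linear_combination hke
        rcases lt_trichotomy k (-2) with hk' | hk' | hk'
        · exact RSS.L1neg h hδR hδw h1R h1w (k + 2) (by omega) hδβ₁
            (by rwa [show β₁ + β₂ - β₁ = β₂ by abel])
        · have hperp2 : form (β₁ + β₂) β₁ = 0 := by
            rw [hk'] at hδβ₁
            norm_num at hδβ₁
            exact hδβ₁
          exact RSS.lemC h hδR hδw hδz (h.1.neg_mem β₁ h1R)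
            (by rw [RSS.form_neg_left hs, RSS.form_neg_right hs, neg_neg]; exact h1w)
            (by rw [RSS.form_neg_right hs, hperp2, neg_zero])
            (by rw [show (β₁ + β₂) + -β₁ = β₂ by abel]; exact h2R)
        · have hkm1 : k = -1 := by omega
          have hδ2 : form (β₁ + β₂) (β₁ + β₂) = form β₂ β₂ := by
            simp only [hs.add_left, RSS.form_add_right hs]
            rw [hs.symm β₂ β₁]
            rw [hkm1] at hke
            push_cast at hke
            linear_combination hke
          exact h2w (by rw [← hδ2]; exact hδw)
      · -- replace the two elements by their sum
        have hres := ih (n - 1) (by omega) ((β₁ + β₂) ::ₘ (s.erase β₁).erase β₂)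
          (by rw [Multiset.card_cons]; omega)
          (by
            intro β hβ
            rcases Multiset.mem_cons.mp hβ with h' | h'
            · rw [h']; exact ⟨hδR, hδw⟩
            · exact hentv β h')
          (by
            intro ρ hρ
            rw [Multiset.sum_cons, ← hsum2]
            exact hperp ρ hρ)
        rw [Multiset.sum_cons, ← hsum2] at hres
        exact hres

end RSSAux

theorem stmt7 {F : Type*} [Field F] [CharZero F] {A : Type*} [AddCommGroup A]
    (form : A → A → F) (R : Set A) (h : IsLFRSS form R) :
    IsLFRSS (fun a b : AddSubgroup.closure (reRoots form R) => form ↑a ↑b)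
      (Subtype.val ⁻¹' reRoots form R : Set (AddSubgroup.closure (reRoots form R))) ∧
    nsRoots (fun a b : AddSubgroup.closure (reRoots form R) => form ↑a ↑b)
      (Subtype.val ⁻¹' reRoots form R : Set (AddSubgroup.closure (reRoots form R))) = {0} := by
  have hs := h.1.toIsSymForm
  constructor
  · constructor
    · refine ⟨⟨?_, ?_⟩, ?_, ?_, ?_, ?_, ?_, ?_⟩
      · exact fun a b => hs.symm _ _
      · intro a b c
        show form (((a + b : AddSubgroup.closure (reRoots form R))) : A) _ = _
        rw [AddSubgroup.coe_add]
        exact hs.add_left _ _ _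
      · show ((0 : AddSubgroup.closure (reRoots form R)) : A) ∈ reRoots form R
        rw [ZeroMemClass.coe_zero]
        exact RSS.mem_reRoots.mpr (Or.inr rfl)
      · exact AddSubgroup.closure_closure_coe_preimage
      · intro x hx
        show ((-x : AddSubgroup.closure (reRoots form R)) : A) ∈ reRoots form R
        rw [AddSubgroup.coe_neg]
        rcases RSS.mem_reRoots.mp hx with ⟨h1, h2⟩ | h0
        · exact RSS.mem_reRoots.mpr (Or.inl ⟨h.1.neg_mem _ h1,
            by rw [RSS.form_neg_left hs, RSS.form_neg_right hs, neg_neg]; exact h2⟩)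
        · exact RSS.mem_reRoots.mpr (Or.inr (by rw [h0, neg_zero]))
      · intro x hx hxx y hy
        have hxR : (x : A) ∈ R := by
          rcases RSS.mem_reRoots.mp hx with ⟨h1, _⟩ | h0
          · exact h1
          · exact absurd (by rw [h0]; exact RSS.form_zero_left hs _) hxx
        exact h.1.cartan _ hxR hxx _ (RSS.reRoots_mem_R h hy)
      · intro x hx hxx y hy
        have hxR : (x : A) ∈ R := by
          rcases RSS.mem_reRoots.mp hx with ⟨h1, _⟩ | h0
          · exact h1
          · exact absurd (by rw [h0]; exact RSS.form_zero_left hs _) hxx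
        obtain ⟨p, q, he, hm⟩ := RSS.main_string h hxR hxx hy
        refine ⟨p, q, he, fun k => ?_⟩
        have hcoe : ((y + k • x : AddSubgroup.closure (reRoots form R)) : A)
            = (y : A) + k • (x : A) := by
          rw [AddSubgroup.coe_add, AddSubgroupClass.coe_zsmul]
        show ((y + k • x : AddSubgroup.closure (reRoots form R)) : A) ∈ reRoots form R ↔ _
        rw [hcoe]
        exact hm k
      · intro x hx hxx y hy hxy
        exfalso
        have hx0 : (x : A) = 0 := by
          rcases RSS.mem_reRoots.mp hx with ⟨_, h2⟩ | h0
          · exact absurd hxx h2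
          · exact h0
        exact hxy (by show form _ _ = 0; rw [hx0]; exact RSS.form_zero_left hs _)
    · intro a ha
      obtain ⟨s, hent, hsum⟩ := RSS.rep_sum h a.2
      have hsum0 : s.sum = 0 := by
        apply RSS.nondeg_key h s.card s rfl hent
        intro ρ hρ
        rw [hsum]
        exact ha ⟨ρ, AddSubgroup.subset_closure hρ⟩
      have hcoe0 : (a : A) = 0 := by rw [← hsum, hsum0]
      exact Subtype.ext (hcoe0.trans (ZeroMemClass.coe_zero _).symm)
  · ext x
    simp only [nsRoots, Set.mem_union, Set.mem_setOf_eq, Set.mem_singleton_iff]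
    constructor
    · rintro (⟨hxS, hx0, _⟩ | h0)
      · rcases RSS.mem_reRoots.mp hxS with ⟨_, hw'⟩ | hz
        · exact absurd hx0 hw'
        · exact Subtype.ext (hz.trans (ZeroMemClass.coe_zero _).symm)
      · exact h0
    · intro h0
      exact Or.inr h0
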